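/- Let H be a real Hilbert space, φ proper convex lower semicontinuous on H, y₀ ∈ D(φ), u ∈ L²(0,T;H) and y ∈ H¹(0,T;H) with y(0) = y₀. Then G_BEN(u,y) = 0 if and only if y′(t) + ∂φ(y(t)) ∋ u(t) for a.e. t ∈ (0,T), i.e. y solves the gradient flow with forcing u (Brezis–Ekeland–Nayroles principle). -/

import Mathlib

open scoped RealInnerProductSpace
open MeasureTheory intervalIntegral

/-- the Brezis–Ekeland–Nayroles principle: with
`G_BEN(u,y) = ∫₀ᵀ (φ(y) + φ*(u - y') - ⟪u,y⟫) dt + ½‖y(T)‖² - ½‖y₀‖²`,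
one has `G_BEN(u,y) = 0` if and only if `u(t) - y'(t) ∈ ∂φ(y(t))` for
a.e. `t ∈ (0,T)`, i.e. `y` solves the gradient flow
`y' + ∂φ(y) ∋ u`, `y(0) = y₀`. -/
theorem stmt7 {H : Type*} [NormedAddCommGroup H] [InnerProductSpace ℝ H]
    [CompleteSpace H]
    (φ φs : H → ℝ)
    (hconv : ConvexOn ℝ Set.univ φ) (hlsc : LowerSemicontinuous φ)
    (hφs : ∀ ξ : H, IsLUB {r : ℝ | ∃ x : H, r = ⟪ξ, x⟫ - φ x} (φs ξ))
    (T : ℝ) (hT : 0 < T)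
    (u y y' : ℝ → H) (y₀ : H) (h0 : y 0 = y₀)
    (hder : ∀ t, HasDerivAt y (y' t) t)
    (hu : IntervalIntegrable (fun t => ‖u t‖ ^ 2) volume 0 T)
    (hy' : IntervalIntegrable (fun t => ‖y' t‖ ^ 2) volume 0 T)
    (hint : IntervalIntegrable
      (fun t => φ (y t) + φs (u t - y' t) - ⟪u t, y t⟫) volume 0 T)
    (hint2 : IntervalIntegrable (fun t => ⟪y' t, y t⟫) volume 0 T) :
    ((∫ t in (0:ℝ)..T, (φ (y t) + φs (u t - y' t) - ⟪u t, y t⟫))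
        + ‖y T‖ ^ 2 / 2 - ‖y₀‖ ^ 2 / 2 = 0)
      ↔ (∀ᵐ t ∂(volume.restrict (Set.Ioo 0 T)),
          ∀ x : H, φ (y t) + ⟪u t - y' t, x - y t⟫ ≤ φ x) := by
  set g : ℝ → ℝ := fun t => φ (y t) + φs (u t - y' t) - ⟪u t - y' t, y t⟫ with hg
  -- Fundamental theorem of calculus for ‖y t‖²/2
  have hderF : ∀ t : ℝ, HasDerivAt (fun s => ‖y s‖ ^ 2 / 2) (⟪y' t, y t⟫) t := by
    intro t
    have h1 : HasDerivAt (fun s => ⟪y s, y s⟫) (⟪y t, y' t⟫ + ⟪y' t, y t⟫) t :=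
      (hder t).inner ℝ (hder t)
    have h2 := h1.div_const 2
    have heq : (fun s => ⟪y s, y s⟫ / 2) = fun s => ‖y s‖ ^ 2 / 2 := by
      funext s; rw [real_inner_self_eq_norm_sq]
    rw [heq] at h2
    have : (⟪y t, y' t⟫ + ⟪y' t, y t⟫) / 2 = ⟪y' t, y t⟫ := by
      rw [real_inner_comm (y t) (y' t)]; ring
    rwa [this] at h2
  have hftc : (∫ t in (0:ℝ)..T, ⟪y' t, y t⟫) = ‖y T‖ ^ 2 / 2 - ‖y₀‖ ^ 2 / 2 := by
    rw [← h0]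
    exact integral_eq_sub_of_hasDerivAt (fun t _ => hderF t) hint2
  -- rewrite LHS as ∫ g
  have hsum : (∫ t in (0:ℝ)..T, (φ (y t) + φs (u t - y' t) - ⟪u t, y t⟫))
      + ‖y T‖ ^ 2 / 2 - ‖y₀‖ ^ 2 / 2 = ∫ t in (0:ℝ)..T, g t := by
    rw [add_sub_assoc, ← hftc, ← integral_add hint hint2]
    congr 1; funext t
    simp only [hg, inner_sub_left]; ring
  have hgint : IntervalIntegrable g volume 0 T := by
    have := hint.add hint2
    apply this.congr
    intro t _
    simp only [hg, inner_sub_left]; ring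
  -- pointwise nonnegativity (Fenchel–Young)
  have hnonneg : ∀ t : ℝ, 0 ≤ g t := by
    intro t
    have hmem : ⟪u t - y' t, y t⟫ - φ (y t) ∈
        {r : ℝ | ∃ x : H, r = ⟪u t - y' t, x⟫ - φ x} := ⟨y t, rfl⟩
    have := (hφs (u t - y' t)).1 hmem
    simp only [hg]; linarith
  -- pointwise characterization of zero
  have hpt : ∀ t : ℝ, g t = 0 ↔
      ∀ x : H, φ (y t) + ⟪u t - y' t, x - y t⟫ ≤ φ x := by
    intro t
    constructor
    · intro h x
      have hmem : ⟪u t - y' t, x⟫ - φ x ∈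
          {r : ℝ | ∃ x : H, r = ⟪u t - y' t, x⟫ - φ x} := ⟨x, rfl⟩
      have hle := (hφs (u t - y' t)).1 hmem
      have h0' : φs (u t - y' t) = ⟪u t - y' t, y t⟫ - φ (y t) := by
        simp only [hg] at h; linarith
      rw [inner_sub_right]
      linarith [h0' ▸ hle]
    · intro h
      have hub : φs (u t - y' t) ≤ ⟪u t - y' t, y t⟫ - φ (y t) := by
        apply (hφs (u t - y' t)).2
        rintro r ⟨x, rfl⟩
        have := h x
        rw [inner_sub_right] at this
        linarith
      have := hnonneg t
      simp only [hg] at this ⊢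
      linarith
  rw [hsum]
  -- integral of nonneg function is zero iff function is a.e. zero
  have hres : volume.restrict (Set.Ioo (0:ℝ) T) = volume.restrict (Set.Ioc 0 T) :=
    Measure.restrict_congr_set Ioo_ae_eq_Ioc
  have hzero : (∫ t in (0:ℝ)..T, g t) = 0 ↔
      (∀ᵐ t ∂(volume.restrict (Set.Ioc 0 T)), g t = 0) := by
    rw [integral_of_le hT.le]
    rw [MeasureTheory.integral_eq_zero_iff_of_nonneg
      (fun t => hnonneg t) hgint.1]
    exact ⟨fun h => h.mono fun t ht => by simpa using ht,
      fun h => h.mono fun t ht => by simpa using ht⟩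
  rw [hzero, hres]
  exact Filter.eventually_congr (Filter.Eventually.of_forall fun t => hpt t)
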